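/- In the setting of dispersing billiards with invariant measure μ, let R_Bid = {x ∈ 𝓜 : limsup_n (|ln d_n^{(r)}(x,x)| − (1/2) ln n)/(ln ln n) = 1/(2r)}, where d_n^{(r)}(x,x) is the r-th minimum of d(x, F x), ..., d(x, F^n x). Suppose for x in a full-measure set the derivative bound ‖D_z F‖ ≤ c m² holds on a neighborhood of x (x in homogeneity strip H_m). Then R_Bid minus a null set is contained in F^{-1}R_Bid, hence μ(R_Bid Δ F^{-1}R_Bid) = 0; by ergodicity μ(R_Bid) ∈ {0, 1}. -/

import Mathlib

open MeasureTheory Filter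

namespace Stmt18Aux

open Set

variable {M : Type*} [MetricSpace M]

/-- The admissible-radius set whose infimum is the `r`-th minimum of return distances. -/
def SS (F : M → M) (r n : ℕ) (x : M) : Set ℝ :=
  {ρ : ℝ | 0 ≤ ρ ∧ r ≤ Set.ncard {k | 1 ≤ k ∧ k ≤ n ∧ dist x (F^[k] x) ≤ ρ}}

noncomputable def dd (F : M → M) (r n : ℕ) (x : M) : ℝ := sInf (SS F r n x)

noncomputable def ff (F : M → M) (r n : ℕ) (x : M) : ℝ :=
  (|Real.log (dd F r n x)| - Real.log n / 2) / Real.log (Real.log n)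

noncomputable def LL (F : M → M) (r : ℕ) (x : M) : EReal :=
  limsup (fun n : ℕ => ((ff F r n x : ℝ) : EReal)) atTop

lemma ncard_ge_iff {P : ℕ → Prop} {n r : ℕ} :
    r ≤ Set.ncard {k | 1 ≤ k ∧ k ≤ n ∧ P k} ↔
      ∃ T : Finset ℕ, T.card = r ∧ ∀ k ∈ T, 1 ≤ k ∧ k ≤ n ∧ P k := by
  have hfin : {k | 1 ≤ k ∧ k ≤ n ∧ P k}.Finite :=
    (Set.finite_Icc 1 n).subset fun k hk => Set.mem_Icc.2 ⟨hk.1, hk.2.1⟩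
  constructor
  · intro h
    obtain ⟨t, hts, htc⟩ := Set.exists_subset_card_eq h
    have htfin : t.Finite := hfin.subset hts
    refine ⟨htfin.toFinset, ?_, fun k hk => hts (htfin.mem_toFinset.1 hk)⟩
    rw [← Set.ncard_eq_toFinset_card t htfin, htc]
  · rintro ⟨T, hTc, hT⟩
    have hsub : (T : Set ℕ) ⊆ {k | 1 ≤ k ∧ k ≤ n ∧ P k} := fun k hk => hT k hk
    calc r = (T : Set ℕ).ncard := by rw [Set.ncard_coe_finset, hTc]
    _ ≤ _ := Set.ncard_le_ncard hsub hfin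

lemma mem_SS_iff {F : M → M} {r n : ℕ} {x : M} {ρ : ℝ} :
    ρ ∈ SS F r n x ↔ 0 ≤ ρ ∧ ∃ T : Finset ℕ, T.card = r ∧
      ∀ k ∈ T, 1 ≤ k ∧ k ≤ n ∧ dist x (F^[k] x) ≤ ρ := by
  unfold SS
  rw [Set.mem_setOf_eq, ncard_ge_iff]

lemma SS_bddBelow (F : M → M) (r n : ℕ) (x : M) : BddBelow (SS F r n x) :=
  ⟨0, fun _ h => h.1⟩

lemma dd_nonneg (F : M → M) (r n : ℕ) (x : M) : 0 ≤ dd F r n x :=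
  Real.sInf_nonneg fun _ h => h.1

lemma SS_nonempty {F : M → M} {r n : ℕ} (hr : 1 ≤ r) (hn : r ≤ n) (x : M) :
    (SS F r n x).Nonempty := by
  have h1n : 1 ≤ n := hr.trans hn
  have hne : (Finset.Icc 1 n).Nonempty := ⟨1, Finset.mem_Icc.2 ⟨le_rfl, h1n⟩⟩
  obtain ⟨T, hTsub, hTcard⟩ := Finset.exists_subset_card_eq
    (show r ≤ (Finset.Icc 1 n).card by rw [Nat.card_Icc]; omega)
  refine ⟨(Finset.Icc 1 n).sup' hne fun k => dist x (F^[k] x),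
    mem_SS_iff.2 ⟨?_, T, hTcard, fun k hk => ?_⟩⟩
  · exact le_trans dist_nonneg
      (Finset.le_sup' (f := fun k => dist x (F^[k] x)) (Finset.mem_Icc.2 ⟨le_rfl, h1n⟩))
  · have hkI := hTsub hk
    have h2 := Finset.mem_Icc.1 hkI
    exact ⟨h2.1, h2.2, Finset.le_sup' (f := fun k => dist x (F^[k] x)) hkI⟩

lemma SS_isClosed (F : M → M) (r n : ℕ) (x : M) : IsClosed (SS F r n x) := by
  have h : SS F r n x = Set.Ici (0:ℝ) ∩
      ⋃ T ∈ Finset.powersetCard r (Finset.Icc 1 n), ⋂ k ∈ T, Set.Ici (dist x (F^[k] x)) := by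
    ext ρ
    rw [mem_SS_iff]
    simp only [Set.mem_inter_iff, Set.mem_Ici, Set.mem_iUnion, Set.mem_iInter,
      Finset.mem_powersetCard, exists_prop]
    constructor
    · rintro ⟨h0, T, hTc, hT⟩
      exact ⟨h0, T, ⟨fun k hk => Finset.mem_Icc.2 ⟨(hT k hk).1, (hT k hk).2.1⟩, hTc⟩,
        fun k hk => (hT k hk).2.2⟩
    · rintro ⟨h0, T, ⟨hTsub, hTc⟩, hT⟩
      refine ⟨h0, T, hTc, fun k hk => ?_⟩
      have h2 := Finset.mem_Icc.1 (hTsub hk)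
      exact ⟨h2.1, h2.2, hT k hk⟩
  rw [h]
  refine isClosed_Ici.inter (Set.Finite.isClosed_biUnion
    (Finset.powersetCard r (Finset.Icc 1 n)).finite_toSet fun T _ => ?_)
  exact isClosed_biInter fun k _ => isClosed_Ici

lemma dd_mem {F : M → M} {r n : ℕ} (hr : 1 ≤ r) (hn : r ≤ n) (x : M) :
    dd F r n x ∈ SS F r n x :=
  (SS_isClosed F r n x).csInf_mem (SS_nonempty hr hn x) (SS_bddBelow F r n x)

lemma dd_le {F : M → M} {r n : ℕ} {x : M} {ρ : ℝ} (h : ρ ∈ SS F r n x) : dd F r n x ≤ ρ :=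
  csInf_le (SS_bddBelow F r n x) h

lemma dd_antitone {F : M → M} {r m n : ℕ} (hr : 1 ≤ r) (hm : r ≤ m) (hmn : m ≤ n) (x : M) :
    dd F r n x ≤ dd F r m x := by
  refine csInf_le_csInf (SS_bddBelow F r n x) (SS_nonempty hr hm x) ?_
  intro ρ hρ
  rw [mem_SS_iff] at hρ ⊢
  obtain ⟨h0, T, hTc, hT⟩ := hρ
  exact ⟨h0, T, hTc, fun k hk => ⟨(hT k hk).1, le_trans (hT k hk).2.1 hmn, (hT k hk).2.2⟩⟩

lemma dd_eq_zero_of_lt {F : M → M} {r n : ℕ} (hr : 1 ≤ r) (hn : n < r) (x : M) :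
    dd F r n x = 0 := by
  have hSS : SS F r n x = ∅ := by
    ext ρ
    rw [mem_SS_iff]
    simp only [Set.mem_empty_iff_false, iff_false, not_and]
    rintro - ⟨T, hTc, hT⟩
    have hsub : T ⊆ Finset.Icc 1 n := fun k hk =>
      Finset.mem_Icc.2 ⟨(hT k hk).1, (hT k hk).2.1⟩
    have hcard := Finset.card_le_card hsub
    rw [hTc, Nat.card_Icc] at hcard
    omega
  unfold dd
  rw [hSS, Real.sInf_empty]

/-- `dd` changes by at most `ε` if all the relevant distance functions change by at most `ε`. -/
lemma dd_le_add {F : M → M} {r n : ℕ} (hr : 1 ≤ r) (hn : r ≤ n) {x y : M} {ε : ℝ}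
    (hε : 0 ≤ ε)
    (h : ∀ k, 1 ≤ k → k ≤ n → dist y (F^[k] y) ≤ dist x (F^[k] x) + ε) :
    dd F r n y ≤ dd F r n x + ε := by
  obtain ⟨-, T, hTc, hT⟩ := mem_SS_iff.1 (dd_mem hr hn x)
  apply dd_le
  rw [mem_SS_iff]
  refine ⟨by have := dd_nonneg F r n x; linarith, T, hTc, fun k hk => ?_⟩
  obtain ⟨h1, h2, h3⟩ := hT k hk
  exact ⟨h1, h2, le_trans (h k h1 h2) (by linarith)⟩

/-- Continuity of `dd` at points where all iterates are continuous. -/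
lemma continuousAt_dd {F : M → M} {r n : ℕ} (hr : 1 ≤ r) {x : M}
    (hg : ∀ k, ContinuousAt (fun y => F^[k] y) x) :
    ContinuousAt (dd F r n) x := by
  by_cases hn : r ≤ n
  · rw [ContinuousAt, Metric.tendsto_nhds]
    intro ε hε
    have hev : ∀ᶠ y in nhds x, ∀ k ∈ Finset.Icc 1 n,
        dist (dist y (F^[k] y)) (dist x (F^[k] x)) < ε/2 := by
      rw [eventually_all_finset]
      intro k _
      have ht : Filter.Tendsto (fun y => dist y (F^[k] y)) (nhds x)
          (nhds (dist x (F^[k] x))) := Filter.Tendsto.dist continuousAt_id (hg k)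
      exact Metric.tendsto_nhds.1 ht (ε/2) (by positivity)
    refine hev.mono fun y hy => ?_
    have h1 : dd F r n y ≤ dd F r n x + ε/2 := by
      refine dd_le_add hr hn (by positivity) fun k hk1 hk2 => ?_
      have := hy k (Finset.mem_Icc.2 ⟨hk1, hk2⟩)
      rw [Real.dist_eq, abs_lt] at this
      linarith
    have h2 : dd F r n x ≤ dd F r n y + ε/2 := by
      refine dd_le_add hr hn (by positivity) fun k hk1 hk2 => ?_
      have := hy k (Finset.mem_Icc.2 ⟨hk1, hk2⟩)
      rw [Real.dist_eq, abs_lt] at this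
      linarith
    rw [Real.dist_eq, abs_lt]
    constructor <;> linarith
  · have hdd : (fun y => dd F r n y) = fun _ => (0:ℝ) := by
      funext y
      exact dd_eq_zero_of_lt hr (by omega) y
    rw [show dd F r n = fun y => dd F r n y from rfl, hdd]
    exact continuousAt_const

/-- The set of points with at least `r` exact returns. -/
def PP (F : M → M) (r : ℕ) : Set M :=
  {y | ∃ n, r ≤ Set.ncard {k | 1 ≤ k ∧ k ≤ n ∧ F^[k] y = y}}

lemma PP_apply {F : M → M} {r : ℕ} {y : M} (h : y ∈ PP F r) : F y ∈ PP F r := by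
  obtain ⟨n, hn⟩ := h
  refine ⟨n, le_trans hn (Set.ncard_le_ncard ?_ ((Set.finite_Icc 1 n).subset
    fun k hk => Set.mem_Icc.2 ⟨hk.1, hk.2.1⟩))⟩
  rintro k ⟨h1, h2, h3⟩
  refine ⟨h1, h2, ?_⟩
  calc F^[k] (F y) = F (F^[k] y) := by
        rw [← Function.iterate_succ_apply, Function.iterate_succ_apply']
  _ = F y := by rw [h3]

lemma dd_pos {F : M → M} {r n : ℕ} (hr : 1 ≤ r) (hn : r ≤ n) {y : M} (hy : y ∉ PP F r) :
    0 < dd F r n y := by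
  rcases lt_or_eq_of_le (dd_nonneg F r n y) with h | h
  · exact h
  exfalso
  apply hy
  obtain ⟨-, T, hTc, hT⟩ := mem_SS_iff.1 (dd_mem hr hn y)
  refine ⟨n, ncard_ge_iff.2 ⟨T, hTc, fun k hk => ⟨(hT k hk).1, (hT k hk).2.1, ?_⟩⟩⟩
  have h2 := (hT k hk).2.2
  rw [← h] at h2
  exact (dist_le_zero.1 h2).symm

lemma dd_eq_zero_of_PP {F : M → M} {r : ℕ} {y : M} (hy : y ∈ PP F r) :
    ∃ N, ∀ n ≥ N, dd F r n y = 0 := by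
  obtain ⟨N, hN⟩ := hy
  refine ⟨N, fun n hn => le_antisymm ?_ (dd_nonneg F r n y)⟩
  apply dd_le
  rw [mem_SS_iff]
  obtain ⟨T, hTc, hT⟩ := ncard_ge_iff.1 hN
  exact ⟨le_rfl, T, hTc, fun k hk => ⟨(hT k hk).1, le_trans (hT k hk).2.1 hn,
    by rw [(hT k hk).2.2, dist_self]⟩⟩

lemma LL_le_of_ev {F : M → M} {r : ℕ} {x : M} {b : ℝ}
    (h : ∀ᶠ n in atTop, ff F r n x ≤ b) : LL F r x ≤ (b : EReal) :=
  limsup_le_of_le (h := h.mono fun _ hn => EReal.coe_le_coe_iff.2 hn)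

lemma le_LL_of_freq {F : M → M} {r : ℕ} {x : M} {b : ℝ}
    (h : ∃ᶠ n in atTop, b ≤ ff F r n x) : (b : EReal) ≤ LL F r x :=
  le_limsup_of_frequently_le (h.mono fun _ hn => EReal.coe_le_coe_iff.2 hn)

lemma freq_of_lt_LL {F : M → M} {r : ℕ} {x : M} {a : ℝ} (h : (a : EReal) < LL F r x) :
    ∃ᶠ n in atTop, a < ff F r n x := by
  by_contra hc
  rw [Filter.not_frequently] at hc
  have hev : ∀ᶠ n in atTop, ff F r n x ≤ a := hc.mono fun n hn => not_lt.1 hn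
  exact absurd h (not_lt.2 (LL_le_of_ev hev))

lemma arith_helper {a b dL dL' Lg Lq lK : ℝ} (hLq : 0 < Lq) (hab : b < a)
    (h1 : a < (dL - Lg / 2) / Lq) (h2 : dL - lK ≤ dL') (h3 : lK / (a - b) < Lq) :
    b ≤ (dL' - Lg / 2) / Lq := by
  rw [lt_div_iff₀ hLq] at h1
  rw [div_lt_iff₀ (by linarith : (0:ℝ) < a - b)] at h3
  rw [le_div_iff₀ hLq]
  nlinarith

/-- Core pointwise claim: a local Lipschitz bound transfers lower limsup bounds from `x` to
`F x`. -/
lemma claimA {F : M → M} {r : ℕ} (hr : 1 ≤ r) {x : M} {K ρb : ℝ}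
    (hK : 1 ≤ K) (hρb : 0 < ρb)
    (hLip : ∀ y ∈ Metric.ball x ρb, ∀ z ∈ Metric.ball x ρb, dist (F y) (F z) ≤ K * dist y z)
    (hP : x ∈ PP F r ∨ F x ∉ PP F r)
    {a : ℝ} (ha : 0 < a) (haL : (a : EReal) < LL F r x) :
    (a : EReal) ≤ LL F r (F x) := by
  have hlog3 : (1:ℝ) ≤ Real.log 3 := by
    rw [Real.le_log_iff_exp_le (by norm_num)]
    exact Real.exp_one_lt_d9.le.trans (by norm_num)
  rcases hP with hxP | hFxP
  · exfalso
    obtain ⟨N, hN⟩ := dd_eq_zero_of_PP hxP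
    have hev : ∀ᶠ n : ℕ in atTop, ff F r n x ≤ 0 := by
      filter_upwards [eventually_ge_atTop N, eventually_ge_atTop 3] with n h1 h2
      have hdd : dd F r n x = 0 := hN n h1
      have h3 : (3:ℝ) ≤ (n:ℝ) := by exact_mod_cast h2
      have hlogn : (1:ℝ) ≤ Real.log n := by
        refine le_trans hlog3 ?_
        rw [Real.log_le_log_iff (by norm_num) (by linarith)]
        exact h3
      unfold ff
      rw [hdd, Real.log_zero, abs_zero]
      apply div_nonpos_of_nonpos_of_nonneg
      · linarith
      · exact Real.log_nonneg hlogn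
    have h0 := LL_le_of_ev hev
    have hlt : (a : EReal) < ((0:ℝ) : EReal) := lt_of_lt_of_le haL h0
    rw [EReal.coe_lt_coe_iff] at hlt
    linarith
  · have hfreq : ∃ᶠ n in atTop, a < ff F r n x := freq_of_lt_LL haL
    suffices hsuff : ∀ b : ℝ, 0 < b → b < a → (b : EReal) ≤ LL F r (F x) by
      by_contra hc
      push_neg at hc
      have hlt : max (LL F r (F x)) ((a/2 : ℝ) : EReal) < (a : EReal) :=
        max_lt hc (by exact_mod_cast (by linarith : a/2 < a))
      obtain ⟨b, hb1, hb2⟩ := EReal.exists_between_coe_real hlt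
      have hba : b < a := EReal.coe_lt_coe_iff.1 hb2
      have hb0 : 0 < b := by
        have h4 : ((a/2:ℝ):EReal) < (b:EReal) := lt_of_le_of_lt (le_max_right _ _) hb1
        rw [EReal.coe_lt_coe_iff] at h4
        linarith
      exact absurd (hsuff b hb0 hba)
        (not_le.2 (lt_of_le_of_lt (le_max_left _ _) hb1))
    intro b hb0 hba
    have hKpos : (0:ℝ) < K := lt_of_lt_of_le one_pos hK
    set c₀ : ℝ := min ρb (1/(2*K)) with hc₀def
    have hc₀ : 0 < c₀ := lt_min hρb (by positivity)
    set D : ℝ := max (dd F r r x) 1 with hDdef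
    have hD1 : (1:ℝ) ≤ D := le_max_right _ _
    have hlogn : Tendsto (fun n : ℕ => Real.log n) atTop atTop :=
      Real.tendsto_log_atTop.comp tendsto_natCast_atTop_atTop
    have hloglogn : Tendsto (fun n : ℕ => Real.log (Real.log n)) atTop atTop :=
      Real.tendsto_log_atTop.comp hlogn
    have hE : ∀ᶠ n : ℕ in atTop, (r ≤ n ∧ 1 < Real.log n ∧ 2*Real.log D < Real.log n ∧
        -(2*Real.log c₀) < Real.log n ∧
        Real.log K / (a - b) < Real.log (Real.log n)) := by
      filter_upwards [eventually_ge_atTop r, hlogn.eventually_gt_atTop 1,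
        hlogn.eventually_gt_atTop (2*Real.log D),
        hlogn.eventually_gt_atTop (-(2*Real.log c₀)),
        hloglogn.eventually_gt_atTop (Real.log K / (a - b))] with n h1 h2 h3 h4 h5
      exact ⟨h1, h2, h3, h4, h5⟩
    apply le_LL_of_freq
    refine (hfreq.and_eventually hE).mono ?_
    rintro n ⟨hfa, hrn, hlog1, hlogD, hlogc₀, hlogK⟩
    have hLqpos : 0 < Real.log (Real.log n) := Real.log_pos hlog1
    have hLgpos : (0:ℝ) < Real.log n := by linarith
    unfold ff at hfa
    have h1 : a * Real.log (Real.log n) < |Real.log (dd F r n x)| - Real.log n / 2 := by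
      rw [lt_div_iff₀ hLqpos] at hfa
      linarith
    have habs : Real.log n / 2 < |Real.log (dd F r n x)| := by
      nlinarith [mul_pos ha hLqpos]
    have hdD : dd F r n x ≤ D := le_trans (dd_antitone hr le_rfl hrn x) (le_max_left _ _)
    have hd0 : 0 < dd F r n x := by
      rcases lt_or_eq_of_le (dd_nonneg F r n x) with h | h
      · exact h
      · exfalso
        rw [← h, Real.log_zero, abs_zero] at habs
        linarith
    have hd1 : dd F r n x < 1 := by
      by_contra hd1
      push_neg at hd1
      rw [abs_of_nonneg (Real.log_nonneg hd1)] at habs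
      have hld : Real.log (dd F r n x) ≤ Real.log D :=
        (Real.log_le_log_iff hd0 (by linarith)).2 hdD
      linarith
    have hlogd : Real.log (dd F r n x) < 0 := Real.log_neg hd0 hd1
    have habs' : |Real.log (dd F r n x)| = -Real.log (dd F r n x) := abs_of_neg hlogd
    have hdc₀ : dd F r n x < c₀ := by
      have h2 : Real.log (dd F r n x) < Real.log c₀ := by
        rw [habs'] at habs
        linarith
      calc dd F r n x = Real.exp (Real.log (dd F r n x)) := (Real.exp_log hd0).symm
      _ < Real.exp (Real.log c₀) := Real.exp_lt_exp.2 h2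
      _ = c₀ := Real.exp_log hc₀
    have hdρ : dd F r n x < ρb := lt_of_lt_of_le hdc₀ (min_le_left _ _)
    have htrans : dd F r n (F x) ≤ K * dd F r n x := by
      obtain ⟨-, T, hTc, hT⟩ := mem_SS_iff.1 (dd_mem hr hrn x)
      apply dd_le
      rw [mem_SS_iff]
      refine ⟨mul_nonneg hKpos.le hd0.le, T, hTc, fun k hk => ?_⟩
      obtain ⟨hk1, hk2, hk3⟩ := hT k hk
      refine ⟨hk1, hk2, ?_⟩
      have hz : F^[k] x ∈ Metric.ball x ρb := by
        rw [Metric.mem_ball, dist_comm]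
        exact lt_of_le_of_lt hk3 hdρ
      have hx0 : x ∈ Metric.ball x ρb := Metric.mem_ball_self hρb
      have hlip := hLip x hx0 (F^[k] x) hz
      have hiter : F^[k] (F x) = F (F^[k] x) := by
        rw [← Function.iterate_succ_apply, Function.iterate_succ_apply']
      rw [hiter]
      calc dist (F x) (F (F^[k] x)) ≤ K * dist x (F^[k] x) := hlip
      _ ≤ K * dd F r n x := by nlinarith
    have hd'0 : 0 < dd F r n (F x) := dd_pos hr hrn hFxP
    have hKd_lt : K * dd F r n x < 1 := by
      have h5 : dd F r n x < 1/(2*K) := lt_of_lt_of_le hdc₀ (min_le_right _ _)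
      have h6 : K * dd F r n x < K * (1/(2*K)) := by nlinarith
      have h7 : K * (1/(2*K)) = 1/2 := by
        field_simp
      linarith
    have hd'1 : dd F r n (F x) < 1 := lt_of_le_of_lt htrans hKd_lt
    have hlogd' : |Real.log (dd F r n (F x))| = -Real.log (dd F r n (F x)) :=
      abs_of_neg (Real.log_neg hd'0 hd'1)
    have hlogle : Real.log (dd F r n (F x)) ≤ Real.log K + Real.log (dd F r n x) := by
      calc Real.log (dd F r n (F x)) ≤ Real.log (K * dd F r n x) :=
            (Real.log_le_log_iff hd'0 (by positivity)).2 htrans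
      _ = Real.log K + Real.log (dd F r n x) := Real.log_mul (ne_of_gt hKpos) (ne_of_gt hd0)
    unfold ff
    refine arith_helper hLqpos hba hfa ?_ hlogK
    rw [habs', hlogd']
    linarith

/-- A.e. regularity property of a point. -/
def GoodP (F : M → M) (r : ℕ) (x : M) : Prop :=
  (∃ K > (0:ℝ), ∃ ρ > (0:ℝ), ∀ y ∈ Metric.ball x ρ, ∀ z ∈ Metric.ball x ρ,
    dist (F y) (F z) ≤ K * dist y z) ∧ (x ∈ PP F r ∨ F x ∉ PP F r)

lemma claimB {F : M → M} {r : ℕ} (hr : 1 ≤ r) {x : M} (hG : GoodP F r x)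
    {q : ℝ} (hq : 0 < q) (hLLx : (q : EReal) ≤ LL F r x) :
    (q : EReal) ≤ LL F r (F x) := by
  obtain ⟨⟨K, hK0, ρb, hρb, hLip⟩, hP⟩ := hG
  have hK'1 : 1 ≤ max K 1 := le_max_right _ _
  have hLip' : ∀ y ∈ Metric.ball x ρb, ∀ z ∈ Metric.ball x ρb,
      dist (F y) (F z) ≤ max K 1 * dist y z := fun y hy z hz =>
    le_trans (hLip y hy z hz) (mul_le_mul_of_nonneg_right (le_max_left _ _) dist_nonneg)
  by_contra hc
  push_neg at hc
  have hlt : max (LL F r (F x)) ((q/2 : ℝ) : EReal) < (q : EReal) :=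
    max_lt hc (by exact_mod_cast (by linarith : q/2 < q))
  obtain ⟨b, hb1, hb2⟩ := EReal.exists_between_coe_real hlt
  have hbq : b < q := EReal.coe_lt_coe_iff.1 hb2
  have hb0 : 0 < b := by
    have h4 : ((q/2:ℝ):EReal) < (b:EReal) := lt_of_le_of_lt (le_max_right _ _) hb1
    rw [EReal.coe_lt_coe_iff] at h4
    linarith
  have hbl : (b : EReal) < LL F r x :=
    lt_of_lt_of_le (by exact_mod_cast hbq : (b:EReal) < (q:EReal)) hLLx
  exact absurd (claimA hr hK'1 hρb hLip' hP hb0 hbl)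
    (not_le.2 (lt_of_le_of_lt (le_max_left _ _) hb1))

/-- The sublevel filtration sets. -/
def Bs (F : M → M) (r : ℕ) (q : ℝ) : Set M :=
  ⋂ (a : ℚ) (_ : (a : ℝ) < q), {x | ∃ᶠ n in atTop, (a : ℝ) < ff F r n x}

lemma mem_Bs_iff {F : M → M} {r : ℕ} {q : ℝ} {x : M} :
    x ∈ Bs F r q ↔ (q : EReal) ≤ LL F r x := by
  simp only [Bs, Set.mem_iInter, Set.mem_setOf_eq]
  constructor
  · intro h
    by_contra hc
    push_neg at hc
    obtain ⟨s, hs1, hs2⟩ := EReal.exists_rat_btwn_of_lt hc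
    have hsq : (s : ℝ) < q := by exact_mod_cast hs2
    have h5 := le_LL_of_freq ((h s hsq).mono fun n hn => le_of_lt hn)
    exact absurd (lt_of_le_of_lt h5 hs1) (lt_irrefl _)
  · intro h a ha
    exact freq_of_lt_LL (lt_of_lt_of_le (by exact_mod_cast ha) h)

/-- Real limsup equalities at a nonzero value coincide with EReal limsup equalities. -/
lemma real_limsup_eq_iff {u : ℕ → ℝ} {c : ℝ} (hc : c ≠ 0) :
    limsup u atTop = c ↔ limsup (fun n => ((u n : ℝ) : EReal)) atTop = (c : EReal) := by
  set S := {a : ℝ | ∀ᶠ n in atTop, u n ≤ a} with hS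
  have hreal : limsup u atTop = sInf S := Filter.limsup_eq
  constructor
  · intro h
    rw [hreal] at h
    have hSne : S.Nonempty := by
      by_contra hne
      rw [Set.not_nonempty_iff_eq_empty] at hne
      rw [hne, Real.sInf_empty] at h
      exact hc h.symm
    have hSbd : BddBelow S := by
      by_contra hbd
      rw [Real.sInf_of_not_bddBelow hbd] at h
      exact hc h.symm
    apply le_antisymm
    · by_contra hgt
      push_neg at hgt
      obtain ⟨s, hs1, hs2⟩ := EReal.exists_rat_btwn_of_lt hgt
      have hcs : c < (s:ℝ) := by exact_mod_cast hs1
      obtain ⟨w, hwS, hws⟩ := exists_lt_of_csInf_lt hSne (h ▸ hcs)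
      have h5 : limsup (fun n => ((u n : ℝ) : EReal)) atTop ≤ ((s:ℝ) : EReal) :=
        limsup_le_of_le (h := hwS.mono fun n hn => by
          exact_mod_cast le_trans hn (le_of_lt hws))
      exact absurd (lt_of_le_of_lt h5 hs2) (lt_irrefl _)
    · by_contra hlt
      push_neg at hlt
      obtain ⟨s, hs1, hs2⟩ := EReal.exists_rat_btwn_of_lt hlt
      have hsc : (s:ℝ) < c := by exact_mod_cast hs2
      have hsnotS : (s:ℝ) ∉ S := by
        intro hmem
        have := csInf_le hSbd hmem
        rw [h] at this
        linarith
      have hfreq : ∃ᶠ n in atTop, (s:ℝ) < u n := by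
        rw [hS, Set.mem_setOf_eq, Filter.not_eventually] at hsnotS
        exact hsnotS.mono fun n hn => not_le.1 hn
      have h5 : ((s:ℝ):EReal) ≤ limsup (fun n => ((u n : ℝ) : EReal)) atTop :=
        le_limsup_of_frequently_le (hfreq.mono fun n hn =>
          EReal.coe_le_coe_iff.2 (le_of_lt hn))
      exact absurd (lt_of_le_of_lt h5 hs1) (lt_irrefl _)
  · intro h
    have hA : ∀ b : ℝ, c < b → b ∈ S := by
      intro b hb
      have hlt : limsup (fun n => ((u n : ℝ):EReal)) atTop < (b:EReal) := by
        rw [h]; exact_mod_cast hb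
      have hev := eventually_lt_of_limsup_lt hlt
      exact hev.mono fun n hn => le_of_lt (by exact_mod_cast hn)
    have hB : ∀ a : ℝ, a ∈ S → c ≤ a := by
      intro a haS
      by_contra hac
      push_neg at hac
      have h5 : limsup (fun n => ((u n : ℝ):EReal)) atTop ≤ (a : EReal) :=
        limsup_le_of_le (h := haS.mono fun n hn => by exact_mod_cast hn)
      rw [h] at h5
      exact absurd (by exact_mod_cast h5 : c ≤ a) (not_le.2 hac)
    have hSne : S.Nonempty := ⟨c + 1, hA _ (by linarith)⟩
    have hSbd : BddBelow S := ⟨c, fun a ha => hB a ha⟩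
    rw [hreal]
    apply le_antisymm
    · by_contra hgt
      push_neg at hgt
      have hmem : c + (sInf S - c)/2 ∈ S := hA _ (by linarith)
      have := csInf_le hSbd hmem
      linarith
    · exact le_csInf hSne hB

section Meas

variable [MeasurableSpace M] [BorelSpace M] {μ : Measure M}

/-- A real function which is continuous at a.e. point is null measurable. -/
lemma nullMeasurableSet_Iio_of_continuousAt {h : M → ℝ}
    (hc : ∀ᵐ x ∂μ, ContinuousAt h x) (t : ℝ) :
    NullMeasurableSet (h ⁻¹' Set.Iio t) μ := by
  set N := toMeasurable μ {x | ¬ ContinuousAt h x} with hN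
  have hNnull : μ N = 0 := by
    rw [hN, measure_toMeasurable]
    exact ae_iff.1 hc
  set U := {x : M | ∃ ε > 0, ∀ y ∈ Metric.ball x ε, h y < t} with hU
  have hUopen : IsOpen U := by
    rw [Metric.isOpen_iff]
    rintro x ⟨ε, hε, hball⟩
    refine ⟨ε/2, by positivity, fun z hz => ⟨ε/2, by positivity, fun y hy => hball y ?_⟩⟩
    rw [Metric.mem_ball] at hz hy ⊢
    calc dist y x ≤ dist y z + dist z x := dist_triangle _ _ _
    _ < ε/2 + ε/2 := add_lt_add hy hz
    _ = ε := by ring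
  have hsub1 : U ⊆ h ⁻¹' Set.Iio t := by
    rintro x ⟨ε, hε, hb⟩
    exact hb x (Metric.mem_ball_self hε)
  have heq : h ⁻¹' Set.Iio t = U ∪ (h ⁻¹' Set.Iio t ∩ N) := by
    apply Set.Subset.antisymm
    · intro x hx
      by_cases hxN : x ∈ N
      · exact Or.inr ⟨hx, hxN⟩
      · left
        have hcx : ContinuousAt h x := by
          by_contra hnc
          exact hxN (subset_toMeasurable μ _ hnc)
        have hx' : h x < t := hx
        have hmem : h ⁻¹' Set.Iio t ∈ nhds x := hcx (Iio_mem_nhds hx')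
        obtain ⟨ε, hε, hb⟩ := Metric.mem_nhds_iff.1 hmem
        exact ⟨ε, hε, fun y hy => hb hy⟩
    · exact Set.union_subset hsub1 Set.inter_subset_left
  rw [heq]
  exact hUopen.measurableSet.nullMeasurableSet.union
    (NullMeasurableSet.of_null (measure_mono_null Set.inter_subset_right hNnull))

lemma nullMeasurable_of_continuousAt {h : M → ℝ}
    (hc : ∀ᵐ x ∂μ, ContinuousAt h x) : NullMeasurable h μ :=
  measurable_of_Iio fun t => nullMeasurableSet_Iio_of_continuousAt hc t

/-- Preimages of null sets under a measure preserving map are null. -/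
lemma preimage_null (hF : MeasurePreserving F μ μ) {Z : Set M} (hZ : μ Z = 0) :
    μ (F ⁻¹' Z) = 0 := by
  refine measure_mono_null (Set.preimage_mono (subset_toMeasurable μ Z)) ?_
  rw [hF.measure_preimage (measurableSet_toMeasurable μ Z).nullMeasurableSet,
    measure_toMeasurable]
  exact hZ

lemma preimage_iterate_null (hF : MeasurePreserving F μ μ) {Z : Set M} (hZ : μ Z = 0) :
    ∀ k, μ (F^[k] ⁻¹' Z) = 0 := by
  intro k
  induction k with
  | zero => simpa using hZ
  | succ k ih =>
      rw [Function.iterate_succ, Set.preimage_comp]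
      exact preimage_null hF ih

lemma continuousAt_iterate {F : M → M} {x : M}
    (h : ∀ j, ContinuousAt F (F^[j] x)) (k : ℕ) :
    ContinuousAt (fun y => F^[k] y) x := by
  induction k with
  | zero => exact continuousAt_id
  | succ k ih =>
      have : (fun y => F^[k+1] y) = F ∘ (fun y => F^[k] y) := by
        funext y
        exact Function.iterate_succ_apply' F k y
      rw [this]
      exact ContinuousAt.comp (h k) ih

lemma nullMeasurableSet_PP {F : M → M} (r : ℕ)
    (hco : ∀ᵐ x ∂μ, ∀ k, ContinuousAt (fun y => F^[k] y) x) :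
    NullMeasurableSet (PP F r) μ := by
  have h : PP F r = ⋃ (n : ℕ) (T : Finset ℕ) (_ : T.card = r),
      ⋂ k ∈ T, {y : M | 1 ≤ k ∧ k ≤ n ∧ F^[k] y = y} := by
    ext y
    simp only [PP, Set.mem_setOf_eq, Set.mem_iUnion, Set.mem_iInter, Set.mem_setOf_eq,
      exists_prop]
    constructor
    · rintro ⟨n, hn⟩
      obtain ⟨T, hTc, hT⟩ := ncard_ge_iff.1 hn
      exact ⟨n, T, hTc, hT⟩
    · rintro ⟨n, T, hTc, hT⟩
      exact ⟨n, ncard_ge_iff.2 ⟨T, hTc, hT⟩⟩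
  rw [h]
  refine NullMeasurableSet.iUnion fun n => NullMeasurableSet.iUnion fun T =>
    NullMeasurableSet.iUnion fun _ => NullMeasurableSet.biInter T.countable_toSet
      fun k _ => ?_
  by_cases hk : 1 ≤ k ∧ k ≤ n
  · have h2 : {y : M | 1 ≤ k ∧ k ≤ n ∧ F^[k] y = y}
        = (fun y => dist (F^[k] y) y) ⁻¹' ({0} : Set ℝ) := by
      ext y
      simp only [Set.mem_setOf_eq, hk.1, hk.2, true_and, Set.mem_preimage,
        Set.mem_singleton_iff]
      constructor
      · intro h3
        rw [h3, dist_self]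
      · intro h3
        exact dist_eq_zero.1 h3
    rw [h2]
    have hcont : ∀ᵐ x ∂μ, ContinuousAt (fun y => dist (F^[k] y) y) x :=
      hco.mono fun x hx => Filter.Tendsto.dist (hx k) continuousAt_id
    exact (nullMeasurable_of_continuousAt hcont) (measurableSet_singleton 0)
  · have h2 : {y : M | 1 ≤ k ∧ k ≤ n ∧ F^[k] y = y} = ∅ := by
      ext y
      simp only [Set.mem_setOf_eq, Set.mem_empty_iff_false, iff_false]
      tauto
    rw [h2]
    exact nullMeasurableSet_empty

lemma nullMeasurableSet_Bs {F : M → M} {r : ℕ} (hr : 1 ≤ r)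
    (hco : ∀ᵐ x ∂μ, ∀ k, ContinuousAt (fun y => F^[k] y) x) (q : ℝ) :
    NullMeasurableSet (Bs F r q) μ := by
  have hin : ∀ (n : ℕ) (a : ℝ), NullMeasurableSet {x : M | a < ff F r n x} μ := by
    intro n a
    have hdd : NullMeasurable (dd F r n) μ :=
      nullMeasurable_of_continuousAt (hco.mono fun x hx => continuousAt_dd hr hx)
    have heq : {x : M | a < ff F r n x} = dd F r n ⁻¹'
        {u : ℝ | a < (|Real.log u| - Real.log n / 2) / Real.log (Real.log n)} := rfl
    rw [heq]
    exact hdd (measurableSet_lt measurable_const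
      ((Real.measurable_log.abs.sub measurable_const).div measurable_const))
  refine NullMeasurableSet.iInter fun a => NullMeasurableSet.iInter fun _ => ?_
  have h : {x : M | ∃ᶠ n in atTop, (a : ℝ) < ff F r n x} =
      ⋂ (N : ℕ), ⋃ (n : ℕ) (_ : N ≤ n), {x : M | (a : ℝ) < ff F r n x} := by
    ext x
    simp only [Set.mem_setOf_eq, Set.mem_iInter, Set.mem_iUnion, exists_prop]
    rw [Filter.frequently_atTop]
  rw [h]
  exact NullMeasurableSet.iInter fun N => NullMeasurableSet.iUnion fun n =>
    NullMeasurableSet.iUnion fun _ => hin n a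

end Meas

end Stmt18Aux

open Stmt18Aux

/-- Essential invariance of the multiple-Logarithm-Law limsup set for dispersing billiards:
if a.e. point has a local Lipschitz bound for `F`, then the set
`R = {x : limsup (|ln d_n^{(r)}(x,x)| − ½ ln n)/ln ln n = 1/(2r)}` satisfies
`μ(R Δ F⁻¹R) = 0`, hence by ergodicity `μ(R) ∈ {0,1}`. -/
theorem stmt18 {M : Type*} [MetricSpace M] [MeasurableSpace M] [BorelSpace M]
    (μ : Measure M) [IsProbabilityMeasure μ]
    (F : M → M) (hF : MeasurePreserving F μ μ) (herg : Ergodic F μ)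
    (r : ℕ) (hr : 1 ≤ r)
    -- a.e. local Lipschitz bound (‖D_z F‖ ≤ c m² near x in a homogeneity strip)
    (hLip : ∀ᵐ x ∂μ, ∃ K > (0 : ℝ), ∃ ρ > (0 : ℝ),
      ∀ y ∈ Metric.ball x ρ, ∀ z ∈ Metric.ball x ρ, dist (F y) (F z) ≤ K * dist y z) :
    let dnr : ℕ → M → ℝ := fun n x =>
      sInf {ρ : ℝ | 0 ≤ ρ ∧ r ≤ Set.ncard {k | 1 ≤ k ∧ k ≤ n ∧ dist x (F^[k] x) ≤ ρ}}
    let R : Set M := {x |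
      limsup (fun n : ℕ =>
        (|Real.log (dnr n x)| - Real.log n / 2) / Real.log (Real.log n)) atTop
        = 1 / (2 * r)}
    μ (symmDiff R (F ⁻¹' R)) = 0 ∧ (μ R = 0 ∨ μ R = 1) := by
  intro dnr R
  classical
  have hr0 : (0:ℝ) < (r:ℝ) := by exact_mod_cast Nat.lt_of_lt_of_le Nat.zero_lt_one hr
  have hc : (0:ℝ) < 1 / (2 * (r:ℝ)) := by positivity
  have hR : R = {x | LL F r x = ((1 / (2 * (r:ℝ)) : ℝ) : EReal)} := by
    ext x
    exact real_limsup_eq_iff (ne_of_gt hc)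
  set c : ℝ := 1 / (2 * (r:ℝ)) with hcdef
  -- a.e. continuity of all iterates
  have hcF : ∀ᵐ x ∂μ, ContinuousAt F x := by
    refine hLip.mono ?_
    rintro x ⟨K, hK, ρ, hρ, hL⟩
    rw [Metric.continuousAt_iff]
    intro ε hε
    refine ⟨min ρ (ε/(K+1)), lt_min hρ (by positivity), ?_⟩
    intro y hy
    have hy1 : dist y x < ρ := lt_of_lt_of_le hy (min_le_left _ _)
    have hy2 : dist y x < ε/(K+1) := lt_of_lt_of_le hy (min_le_right _ _)
    have hyb : y ∈ Metric.ball x ρ := Metric.mem_ball.2 hy1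
    have hxb : x ∈ Metric.ball x ρ := Metric.mem_ball_self hρ
    have h1 : dist (F y) (F x) ≤ K * dist y x := hL y hyb x hxb
    have h2 : K * dist y x < K * (ε/(K+1)) := by
      exact mul_lt_mul_of_pos_left hy2 hK
    have h3 : K * (ε/(K+1)) < ε := by
      rw [mul_div_assoc', div_lt_iff₀ (by positivity : (0:ℝ) < K + 1)]
      nlinarith
    linarith
  have hZnull : μ {x | ¬ ContinuousAt F x} = 0 := ae_iff.1 hcF
  have hall : ∀ᵐ x ∂μ, ∀ j : ℕ, F^[j] x ∉ {x | ¬ ContinuousAt F x} := by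
    rw [ae_all_iff]
    intro j
    exact measure_eq_zero_iff_ae_notMem.1 (preimage_iterate_null hF hZnull j)
  have hco : ∀ᵐ x ∂μ, ∀ k, ContinuousAt (fun y => F^[k] y) x := by
    refine hall.mono fun x hx k => continuousAt_iterate (fun j => ?_) k
    exact not_not.1 (hx j)
  -- characterization of membership in R
  have hRB : ∀ x : M, x ∈ R ↔
      (x ∈ Bs F r c ∧ ∀ s : ℚ, c < (s:ℝ) → x ∉ Bs F r (s:ℝ)) := by
    intro x
    rw [hR, Set.mem_setOf_eq]
    constructor
    · intro h
      refine ⟨mem_Bs_iff.2 (le_of_eq h.symm), ?_⟩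
      intro s hs hmem
      rw [mem_Bs_iff, h] at hmem
      have h6 : ((s:ℝ) : EReal) ≤ ((c:ℝ) : EReal) := hmem
      rw [EReal.coe_le_coe_iff] at h6
      linarith
    · rintro ⟨h1, h2⟩
      rw [mem_Bs_iff] at h1
      refine le_antisymm ?_ h1
      by_contra hgt
      push_neg at hgt
      obtain ⟨s, hs1, hs2⟩ := EReal.exists_rat_btwn_of_lt hgt
      exact h2 s (by exact_mod_cast hs1) (mem_Bs_iff.2 (le_of_lt hs2))
  -- the periodic-like set
  have hPPnm : NullMeasurableSet (PP F r) μ := nullMeasurableSet_PP r hco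
  have hPPsub : PP F r ⊆ F ⁻¹' PP F r := fun y hy => PP_apply hy
  have hPPnull : μ (F ⁻¹' PP F r \ PP F r) = 0 := by
    have h1 : μ (F ⁻¹' PP F r) = μ (PP F r) := hF.measure_preimage hPPnm
    rw [measure_diff hPPsub hPPnm (measure_ne_top μ _), h1, tsub_self]
  have hGood : ∀ᵐ x ∂μ, GoodP F r x := by
    refine hLip.and ?_
    have h0 := measure_eq_zero_iff_ae_notMem.1 hPPnull
    refine h0.mono fun x hx => ?_
    by_cases h : F x ∈ PP F r
    · left
      by_contra hxP
      exact hx ⟨h, hxP⟩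
    · right
      exact h
  have hGoodnull : μ {x | ¬ GoodP F r x} = 0 := ae_iff.1 hGood
  -- the filtration sets are essentially invariant
  have hBnull : ∀ q : ℝ, 0 < q → μ (symmDiff (Bs F r q) (F ⁻¹' Bs F r q)) = 0 := by
    intro q hq
    have hBnm : NullMeasurableSet (Bs F r q) μ := nullMeasurableSet_Bs hr hco q
    have hprenm : NullMeasurableSet (F ⁻¹' Bs F r q) μ :=
      hBnm.preimage hF.quasiMeasurePreserving
    have h1 : μ (Bs F r q \ F ⁻¹' Bs F r q) = 0 := by
      refine measure_mono_null ?_ hGoodnull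
      intro x hx hGx
      exact hx.2 (Set.mem_preimage.2 (mem_Bs_iff.2 (claimB hr hGx hq (mem_Bs_iff.1 hx.1))))
    have hpre : μ (F ⁻¹' Bs F r q) = μ (Bs F r q) := hF.measure_preimage hBnm
    have hEq : μ (Bs F r q \ F ⁻¹' Bs F r q) = μ (F ⁻¹' Bs F r q \ Bs F r q) :=
      measure_diff_symm hBnm hprenm hpre.symm (measure_ne_top μ _)
    have h2 : μ (F ⁻¹' Bs F r q \ Bs F r q) = 0 := hEq.symm.trans h1
    rw [Set.symmDiff_def]
    exact measure_union_null h1 h2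
  -- the global null set
  set N : Set M := {x | ¬ GoodP F r x} ∪ symmDiff (Bs F r c) (F ⁻¹' Bs F r c) ∪
      ⋃ (s : ℚ) (_ : c < (s:ℝ)), symmDiff (Bs F r (s:ℝ)) (F ⁻¹' Bs F r (s:ℝ)) with hNdef
  have hNnull : μ N = 0 := by
    rw [hNdef]
    refine measure_union_null (measure_union_null hGoodnull (hBnull c hc)) ?_
    exact measure_iUnion_null fun s => measure_iUnion_null fun hs =>
      hBnull _ (lt_trans hc hs)
  have hiff : ∀ x, x ∉ N → (x ∈ R ↔ F x ∈ R) := by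
    intro x hxN
    rw [hNdef] at hxN
    simp only [Set.mem_union, Set.mem_iUnion, Set.mem_setOf_eq, not_or, not_exists] at hxN
    obtain ⟨⟨hG, hBc⟩, hBsq⟩ := hxN
    have hc_iff : x ∈ Bs F r c ↔ F x ∈ Bs F r c := by
      rw [Set.mem_symmDiff] at hBc
      push_neg at hBc
      constructor
      · intro h
        exact Set.mem_preimage.1 (hBc.1 h)
      · intro h
        exact hBc.2 (Set.mem_preimage.2 h)
    have hs_iff : ∀ s : ℚ, c < (s:ℝ) → (x ∈ Bs F r (s:ℝ) ↔ F x ∈ Bs F r (s:ℝ)) := by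
      intro s hs
      have h := hBsq s hs
      rw [Set.mem_symmDiff] at h
      push_neg at h
      constructor
      · intro h1
        exact Set.mem_preimage.1 (h.1 h1)
      · intro h1
        exact h.2 (Set.mem_preimage.2 h1)
    rw [hRB x, hRB (F x)]
    constructor
    · rintro ⟨h1, h2⟩
      exact ⟨hc_iff.1 h1, fun s hs hmem => h2 s hs ((hs_iff s hs).2 hmem)⟩
    · rintro ⟨h1, h2⟩
      exact ⟨hc_iff.2 h1, fun s hs hmem => h2 s hs ((hs_iff s hs).1 hmem)⟩
  have hsymm : μ (symmDiff R (F ⁻¹' R)) = 0 := by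
    refine measure_mono_null ?_ hNnull
    intro x hx
    by_contra hxN
    rw [Set.mem_symmDiff] at hx
    have h := hiff x hxN
    rw [Set.mem_preimage] at hx
    tauto
  refine ⟨hsymm, ?_⟩
  have hRm : NullMeasurableSet R μ := by
    have h : R = Bs F r c \ ⋃ (s : ℚ) (_ : c < (s:ℝ)), Bs F r (s:ℝ) := by
      ext x
      rw [hRB x, Set.mem_diff]
      simp only [Set.mem_iUnion, exists_prop, not_exists, not_and]
    rw [h]
    exact (nullMeasurableSet_Bs hr hco c).diff (NullMeasurableSet.iUnion fun s =>
      NullMeasurableSet.iUnion fun _ => nullMeasurableSet_Bs hr hco _)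
  have hle : R ≤ᵐ[μ] F ⁻¹' R := by
    rw [ae_le_set]
    refine measure_mono_null ?_ hsymm
    intro x hx
    rw [Set.mem_symmDiff]
    exact Or.inl ⟨hx.1, hx.2⟩
  rcases herg.ae_empty_or_univ_of_ae_le_preimage' hRm hle (measure_ne_top μ R) with h | h
  · left
    rw [measure_congr h, measure_empty]
  · right
    rw [measure_congr h, measure_univ]
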